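/- For all integers n ≥ 1 and ℓ ≥ 1, the number of distinct Boolean functions f : {0,1}^n → {0,1} computable by comparator circuits on n variables with at most ℓ wires is at most (2n)^ℓ · (ℓ² + 1)^{ℓ²} · ℓ. -/

import Mathlib

/-- A comparator circuit on `n` Boolean variables with `ℓ` wires.
Each wire is labelled by a literal: a pair `(i, neg)` meaning the variable `x_i`
if `neg = false` and its negation `¬x_i` if `neg = true`.  Each gate is an ordered
pair of distinct wires `(w, w')`: applying it, `w` receives the conjunction of the
two held values and `w'` receives their disjunction.  A designated output wire
carries the result of the computation. -/
structure CompCircuit (n ℓ : ℕ) where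
  label : Fin ℓ → Fin n × Bool
  gates : List (Fin ℓ × Fin ℓ)
  distinct : ∀ g ∈ gates, g.1 ≠ g.2
  out : Fin ℓ

namespace CompCircuit

variable {n ℓ : ℕ}

/-- Value of the literal `(i, neg)` on input `x`. -/
def litVal (x : Fin n → Bool) (p : Fin n × Bool) : Bool :=
  if p.2 then !(x p.1) else x p.1

/-- Applying a comparator gate to the current wire values. -/
def applyGate (g : Fin ℓ × Fin ℓ) (v : Fin ℓ → Bool) : Fin ℓ → Bool :=
  fun w => if w = g.1 then v g.1 && v g.2 else if w = g.2 then v g.1 || v g.2 else v w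

/-- Initial wire values on input `x`: each wire holds the value of its literal. -/
def init (C : CompCircuit n ℓ) (x : Fin n → Bool) : Fin ℓ → Bool :=
  fun w => litVal x (C.label w)

/-- Wire values after all the gates have been applied in order. -/
def run (C : CompCircuit n ℓ) (x : Fin n → Bool) : Fin ℓ → Bool :=
  C.gates.foldl (fun v g => applyGate g v) (C.init x)

/-- The output of the circuit: the final value of the output wire. -/
def eval (C : CompCircuit n ℓ) (x : Fin n → Bool) : Bool :=
  C.run x C.out

/-- Wire values after the first `t` gates have been applied (i.e. just before gate `t`). -/
def stateAfter (C : CompCircuit n ℓ) (x : Fin n → Bool) (t : ℕ) : Fin ℓ → Bool :=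
  (C.gates.take t).foldl (fun v g => applyGate g v) (C.init x)

/-- The pair `(u_g(x), v_g(x))` of in-values of gate number `i` on input `x`. -/
def gateIn (C : CompCircuit n ℓ) (x : Fin n → Bool) (i : Fin C.gates.length) : Bool × Bool :=
  (C.stateAfter x i (C.gates.get i).1, C.stateAfter x i (C.gates.get i).2)

/-- Gate `i` is TYPE-1 useless: its in-values never form the pair `(1,0)`,
i.e. they always lie in `{(0,1),(0,0),(1,1)}`. -/
def Type1UselessAt (C : CompCircuit n ℓ) (i : Fin C.gates.length) : Prop :=
  ∀ x : Fin n → Bool, C.gateIn x i ≠ (true, false)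

/-- Gate `i` is TYPE-2 useless: its in-values never form the pair `(0,1)`,
i.e. they always lie in `{(1,0),(0,0),(1,1)}`. -/
def Type2UselessAt (C : CompCircuit n ℓ) (i : Fin C.gates.length) : Prop :=
  ∀ x : Fin n → Bool, C.gateIn x i ≠ (false, true)

/-- Gate `i` is useless if it is TYPE-1 or TYPE-2 useless. -/
def UselessAt (C : CompCircuit n ℓ) (i : Fin C.gates.length) : Prop :=
  C.Type1UselessAt i ∨ C.Type2UselessAt i

end CompCircuit


namespace CompCircuit

variable {n ℓ : ℕ}

/-- Run a list of gates on a wire-value vector. -/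
def runL (L : List (Fin ℓ × Fin ℓ)) (v : Fin ℓ → Bool) : Fin ℓ → Bool :=
  L.foldl (fun v g => applyGate g v) v

@[simp] lemma runL_nil (v : Fin ℓ → Bool) : runL [] v = v := rfl
@[simp] lemma runL_cons (g : Fin ℓ × Fin ℓ) (L : List (Fin ℓ × Fin ℓ)) (v : Fin ℓ → Bool) :
    runL (g :: L) v = runL L (applyGate g v) := rfl

lemma applyGate_eq_self {g : Fin ℓ × Fin ℓ} {v : Fin ℓ → Bool}
    (h : ¬(v g.1 = true ∧ v g.2 = false)) : applyGate g v = v := by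
  funext w
  rcases eq_or_ne w g.1 with rfl | h1
  · cases hv1 : v g.1 <;> cases hv2 : v g.2 <;> simp_all [applyGate]
  · rcases eq_or_ne w g.2 with rfl | h2
    · cases hv1 : v g.1 <;> cases hv2 : v g.2 <;> simp_all [applyGate]
    · simp [applyGate, h1, h2]

lemma applyGate_eq_swap {g : Fin ℓ × Fin ℓ} {v : Fin ℓ → Bool}
    (h : ¬(v g.1 = false ∧ v g.2 = true)) :
    applyGate g v = fun w => v (Equiv.swap g.1 g.2 w) := by
  funext w
  rcases eq_or_ne w g.1 with rfl | h1
  · cases hv1 : v g.1 <;> cases hv2 : v g.2 <;>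
      simp_all [applyGate, Equiv.swap_apply_left]
  · rcases eq_or_ne w g.2 with rfl | h2
    · cases hv1 : v g.1 <;> cases hv2 : v g.2 <;>
        simp_all [applyGate, Equiv.swap_apply_right]
    · simp [applyGate, h1, h2, Equiv.swap_apply_of_ne_of_ne h1 h2]

lemma applyGate_perm (π : Equiv.Perm (Fin ℓ)) (g : Fin ℓ × Fin ℓ) (v : Fin ℓ → Bool) (w : Fin ℓ) :
    applyGate (π g.1, π g.2) v (π w) = applyGate g (fun u => v (π u)) w := by
  simp [applyGate, π.injective.eq_iff]

lemma runL_conj (π : Equiv.Perm (Fin ℓ)) (M : List (Fin ℓ × Fin ℓ)) :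
    ∀ (v : Fin ℓ → Bool) (w : Fin ℓ),
      runL M (fun u => v (π u)) w = runL (M.map (fun g => (π g.1, π g.2))) v (π w) := by
  induction M with
  | nil => intro v w; simp
  | cons g M ih =>
    intro v w
    simp only [runL_cons, List.map_cons]
    have h : applyGate g (fun u => v (π u)) = fun u => (applyGate (π g.1, π g.2) v) (π u) := by
      funext u; rw [applyGate_perm]
    rw [h, ih]

/-- The set of "comparable" ordered pairs of wires. -/
def Rel (V : (Fin n → Bool) → Fin ℓ → Bool) : Set (Fin ℓ × Fin ℓ) :=
  {p | ∀ x, V x p.1 = true → V x p.2 = true}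

lemma Rel_ncard_le (V : (Fin n → Bool) → Fin ℓ → Bool) : (Rel V).ncard ≤ ℓ * ℓ := by
  calc (Rel V).ncard ≤ (Set.univ : Set (Fin ℓ × Fin ℓ)).ncard :=
        Set.ncard_le_ncard (Set.subset_univ _) Set.finite_univ
    _ = ℓ * ℓ := by simp [Set.ncard_univ]

lemma phi_lt {a b : Fin ℓ} (hab : a ≠ b) (V : (Fin n → Bool) → Fin ℓ → Bool)
    (h1 : ∃ x, V x a = true ∧ V x b = false)
    (h2 : ∃ x, V x a = false ∧ V x b = true) :
    (Rel V).ncard < (Rel (fun x => applyGate (a, b) (V x))).ncard := by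
  classical
  set V' : (Fin n → Bool) → Fin ℓ → Bool := fun x => applyGate (a, b) (V x) with hV'def
  have hV' : ∀ x w, V' x w =
      if w = a then V x a && V x b else if w = b then V x a || V x b else V x w := by
    intro x w; rfl
  have hba : b ≠ a := hab.symm
  set τ : Equiv.Perm (Fin ℓ) := Equiv.swap a b with hτ
  have swa : τ a = b := Equiv.swap_apply_left a b
  have swb : τ b = a := Equiv.swap_apply_right a b
  have K : ∀ q : Fin ℓ × Fin ℓ, q ∈ Rel V → q ∉ Rel V' →
      (τ q.1, τ q.2) ∈ Rel V' ∧ (τ q.1, τ q.2) ∉ Rel V := by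
    rintro ⟨u, v⟩ hq hq'
    simp only [Rel, Set.mem_setOf_eq, not_forall] at hq hq' ⊢
    obtain ⟨x₀, h₀u, h₀v⟩ := hq'
    rw [Bool.not_eq_true] at h₀v
    rcases eq_or_ne u a with hu | hua
    · -- u = a : contradiction in all subcases
      exfalso
      rw [hu] at hq h₀u
      rcases eq_or_ne v a with hv | hva
      · rw [hv] at h₀v; simp [h₀u] at h₀v
      rcases eq_or_ne v b with hv | hvb
      · rw [hv] at h₀v
        rw [hV'] at h₀u h₀v
        simp only [if_pos rfl, if_neg hba] at h₀u h₀v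
        cases hVa : V x₀ a <;> cases hVb : V x₀ b <;> simp_all
      · rw [hV'] at h₀u h₀v
        simp only [if_pos rfl, if_neg hva, if_neg hvb] at h₀u h₀v
        have hVa : V x₀ a = true := by cases hVa : V x₀ a <;> simp_all
        have := hq x₀ hVa
        simp_all
    rcases eq_or_ne u b with hu | hub
    · -- u = b
      rw [hu] at hq h₀u ⊢
      rw [hV'] at h₀u
      simp only [if_neg hba, if_pos rfl] at h₀u
      rcases eq_or_ne v a with hv | hva
      · -- q = (b, a)
        rw [hv] at hq h₀v ⊢
        rw [hV'] at h₀v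
        simp only [if_pos rfl] at h₀v
        have hVa : V x₀ a = true := by
          cases hA : V x₀ a <;> cases hB : V x₀ b <;> simp_all [hq x₀]
        have hVb : V x₀ b = false := by
          cases hB : V x₀ b <;> simp_all
        constructor
        · rw [swa, swb]
          intro x hx
          rw [hV'] at hx ⊢
          simp only [if_pos rfl] at hx
          simp only [if_neg hba, if_pos rfl]
          cases hA : V x a <;> cases hB : V x b <;> simp_all
        · rw [swa, swb]
          exact ⟨x₀, hVa, by simp [hVb]⟩
      rcases eq_or_ne v b with hv | hvb
      · exfalso
        rw [hv] at h₀v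
        rw [hV'] at h₀v
        simp only [if_neg hba, if_pos rfl] at h₀v
        simp_all
      · -- q = (b, w)
        rw [hV'] at h₀v
        simp only [if_neg hva, if_neg hvb] at h₀v
        have hVa : V x₀ a = true := by
          cases hA : V x₀ a <;> cases hB : V x₀ b <;> simp_all [hq x₀]
        constructor
        · rw [swb, Equiv.swap_apply_of_ne_of_ne hva hvb]
          intro x hx
          rw [hV'] at hx ⊢
          simp only [if_pos rfl] at hx
          simp only [if_neg hva, if_neg hvb]
          exact hq x (by cases hA : V x a <;> cases hB : V x b <;> simp_all)
        · rw [swb, Equiv.swap_apply_of_ne_of_ne hva hvb]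
          exact ⟨x₀, hVa, by simp [h₀v]⟩
    · -- u = w outside
      rcases eq_or_ne v a with hv | hva
      · -- q = (w, a)
        rw [hv] at hq h₀v ⊢
        rw [hV'] at h₀u h₀v
        simp only [if_neg hua, if_neg hub, if_pos rfl] at h₀u h₀v
        have hVb : V x₀ b = false := by
          have := hq x₀ h₀u
          cases hB : V x₀ b <;> simp_all
        constructor
        · rw [swa, Equiv.swap_apply_of_ne_of_ne hua hub]
          intro x hx
          rw [hV'] at hx ⊢
          simp only [if_neg hua, if_neg hub] at hx
          simp only [if_neg hba, if_pos rfl]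
          simp [hq x hx]
        · rw [swa, Equiv.swap_apply_of_ne_of_ne hua hub]
          exact ⟨x₀, h₀u, by simp [hVb]⟩
      rcases eq_or_ne v b with hv | hvb
      · exfalso
        rw [hv] at hq h₀v
        rw [hV'] at h₀u h₀v
        simp only [if_neg hua, if_neg hub, if_neg hba, if_pos rfl] at h₀u h₀v
        have := hq x₀ h₀u
        simp_all
      · exfalso
        rw [hV'] at h₀u h₀v
        simp only [if_neg hua, if_neg hub, if_neg hva, if_neg hvb] at h₀u h₀v
        have := hq x₀ h₀u
        simp_all
  -- the injection
  set m : Fin ℓ × Fin ℓ → Fin ℓ × Fin ℓ :=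
    fun q => if q ∈ Rel V' then q else (τ q.1, τ q.2) with hm
  have hmapsto : Set.MapsTo m (Rel V) (Rel V') := by
    intro q hqmem
    by_cases hq' : q ∈ Rel V'
    · simpa [hm, hq']
    · have := (K q hqmem hq').1
      simpa [hm, hq']
  have hinj : Set.InjOn m (Rel V) := by
    intro p hp q hqmem hpq
    by_cases hp' : p ∈ Rel V' <;> by_cases hq' : q ∈ Rel V'
    · simpa [hm, hp', hq'] using hpq
    · exfalso
      simp only [hm, if_pos hp', if_neg hq'] at hpq
      exact (K q hqmem hq').2 (hpq ▸ hp)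
    · exfalso
      simp only [hm, if_neg hp', if_pos hq'] at hpq
      exact (K p hp hp').2 (hpq ▸ hqmem)
    · simp only [hm, if_neg hp', if_neg hq', Prod.mk.injEq] at hpq
      exact Prod.ext (τ.injective hpq.1) (τ.injective hpq.2)
  have himg : m '' (Rel V) ⊂ Rel V' := by
    constructor
    · exact hmapsto.image_subset
    · intro hsub
      have hab' : (a, b) ∈ Rel V' := by
        intro x hx
        rw [hV'] at hx ⊢
        simp only [if_pos rfl] at hx
        simp only [if_neg hba, if_pos rfl]
        cases hA : V x a <;> cases hB : V x b <;> simp_all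
      obtain ⟨q, hqmem, hqeq⟩ := hsub hab'
      by_cases hq' : q ∈ Rel V'
      · simp only [hm, if_pos hq'] at hqeq
        subst hqeq
        obtain ⟨x, hxa, hxb⟩ := h1
        have := hqmem x hxa
        simp_all
      · simp only [hm, if_neg hq', Prod.mk.injEq] at hqeq
        have hq1 : q.1 = b := τ.injective (hqeq.1.trans swb.symm)
        have hq2 : q.2 = a := τ.injective (hqeq.2.trans swa.symm)
        obtain ⟨y, hya, hyb⟩ := h2
        have := hqmem y
        rw [hq1, hq2] at this
        have := this hyb
        simp_all
  calc (Rel V).ncard = (m '' Rel V).ncard := (Set.ncard_image_of_injOn hinj).symm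
    _ < (Rel V').ncard := Set.ncard_lt_ncard himg (Set.toFinite _)
/-- Main shortening lemma. -/
lemma shorten : ∀ (k : ℕ) (L : List (Fin ℓ × Fin ℓ)), L.length ≤ k →
    ∀ V : (Fin n → Bool) → Fin ℓ → Bool,
    ∃ (L' : List (Fin ℓ × Fin ℓ)) (π : Equiv.Perm (Fin ℓ)),
      L'.length + (Rel V).ncard ≤ ℓ * ℓ ∧
      ∀ x w, runL L' (V x) w = runL L (V x) (π w) := by
  intro k
  induction k with
  | zero =>
    intro L hL V
    rw [Nat.le_zero, List.length_eq_zero_iff] at hL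
    subst hL
    exact ⟨[], Equiv.refl _, by simpa using Rel_ncard_le V, fun x w => rfl⟩
  | succ k ih =>
    intro L hL V
    match L with
    | [] => exact ⟨[], Equiv.refl _, by simpa using Rel_ncard_le V, fun x w => rfl⟩
    | g :: rest =>
      have hrest : rest.length ≤ k := by simpa using hL
      by_cases h1 : ∀ x, ¬(V x g.1 = true ∧ V x g.2 = false)
      · -- type-1 useless: gate acts as identity
        obtain ⟨L', π, hlen, hrun⟩ := ih rest hrest V
        refine ⟨L', π, hlen, fun x w => ?_⟩
        rw [hrun x w, runL_cons, applyGate_eq_self (h1 x)]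
      · push_neg at h1
        obtain ⟨x₁, hx₁⟩ := h1
        by_cases h2 : ∀ x, ¬(V x g.1 = false ∧ V x g.2 = true)
        · -- type-2 useless: gate acts as the swap τ
          set τ : Equiv.Perm (Fin ℓ) := Equiv.swap g.1 g.2 with hτ
          set M : List (Fin ℓ × Fin ℓ) := rest.map (fun p => (τ p.1, τ p.2)) with hM
          have hMlen : M.length ≤ k := by simpa [hM] using hrest
          obtain ⟨L', π, hlen, hrun⟩ := ih M hMlen V
          refine ⟨L', π.trans τ, hlen, fun x w => ?_⟩
          rw [hrun x w, runL_cons, applyGate_eq_swap (h2 x)]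
          have hc := runL_conj τ rest (V x) (τ (π w))
          rw [hτ, Equiv.swap_apply_self] at hc
          rw [hM, ← hτ, ← hc]
          simp [Equiv.trans_apply]
          rfl
        · -- useful gate
          push_neg at h2
          obtain ⟨x₂, hx₂⟩ := h2
          have hne : g.1 ≠ g.2 := by
            intro hcon
            rw [hcon] at hx₁
            simp_all
          have hlt : (Rel V).ncard < (Rel (fun x => applyGate g (V x))).ncard := by
            have := phi_lt hne V ⟨x₁, hx₁⟩ ⟨x₂, hx₂⟩
            simpa using this
          obtain ⟨L', π, hlen, hrun⟩ := ih rest hrest (fun x => applyGate g (V x))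
          refine ⟨g :: L', π, ?_, fun x w => ?_⟩
          · have := Rel_ncard_le (fun x => applyGate g (V x))
            simp only [List.length_cons]
            omega
          · rw [runL_cons, hrun x w, runL_cons]
lemma runL_castLE {ℓ' : ℕ} (h : ℓ' ≤ ℓ) (L : List (Fin ℓ' × Fin ℓ')) :
    ∀ (v : Fin ℓ' → Bool) (V : Fin ℓ → Bool), (∀ w, V (Fin.castLE h w) = v w) →
    ∀ w, runL (L.map fun g => (Fin.castLE h g.1, Fin.castLE h g.2)) V (Fin.castLE h w)
      = runL L v w := by
  induction L with
  | nil => intro v V hcomp w; simpa [runL] using hcomp w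
  | cons g L ih =>
    intro v V hcomp w
    simp only [List.map_cons, runL]
    have hstep : ∀ u, applyGate (Fin.castLE h g.1, Fin.castLE h g.2) V (Fin.castLE h u)
        = applyGate g v u := by
      intro u
      simp only [applyGate, Fin.castLE_inj, hcomp]
    exact ih (applyGate g v) _ hstep w

lemma range_decode {α : Type*} : ∀ (L : List α) (m : ℕ), L.length ≤ m →
    (List.range m).filterMap (fun i => L[i]?) = L := by
  intro L
  induction L with
  | nil => intro m _; simp
  | cons a tl ih =>
    intro m hm
    match m with
    | m' + 1 =>
      rw [List.range_succ_eq_map, List.filterMap_cons]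
      simp only [List.getElem?_cons_zero, List.filterMap_map]
      have hfun : ((fun i => (a :: tl)[i]?) ∘ Nat.succ) = fun i => tl[i]? := by
        funext i; simp
      rw [hfun, ih m' (by simpa using hm)]

lemma decode_encode {α : Type*} (L : List α) (m : ℕ) (hm : L.length ≤ m) :
    (List.finRange m).filterMap (fun i : Fin m => L[i.val]?) = L := by
  have h1 : (List.finRange m).filterMap (fun i : Fin m => L[i.val]?)
      = ((List.finRange m).map (Fin.val)).filterMap (fun i => L[i]?) :=
    List.filterMap_map.symm
  rw [h1, (by apply List.ext_getElem <;> simp : (List.finRange m).map Fin.val = List.range m), range_decode L m hm]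

abbrev Enc (n ℓ : ℕ) :=
  (Fin ℓ → Fin n × Bool) × (Fin (ℓ ^ 2) → Option (Fin ℓ × Fin ℓ)) × Fin ℓ

def evalEnc (e : Enc n ℓ) : (Fin n → Bool) → Bool := fun x =>
  runL ((List.finRange (ℓ ^ 2)).filterMap e.2.1) (fun w => litVal x (e.1 w)) e.2.2

end CompCircuit

open CompCircuit in
/-- For all `n ≥ 1` and `ℓ ≥ 1`, the number of distinct Boolean functions on
`n` bits computable by comparator circuits with at most `ℓ` wires is at most
`(2n)^ℓ · (ℓ² + 1)^(ℓ²) · ℓ`. -/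
theorem count_functions_small_circuits (n ℓ : ℕ) (hn : 1 ≤ n) (hℓ : 1 ≤ ℓ) :
    {f : (Fin n → Bool) → Bool |
        ∃ ℓ' ≤ ℓ, ∃ C : CompCircuit n ℓ', ∀ x, C.eval x = f x}.ncard
      ≤ (2 * n) ^ ℓ * (ℓ ^ 2 + 1) ^ (ℓ ^ 2) * ℓ := by
  have hsq : ℓ ^ 2 = ℓ * ℓ := sq ℓ
  have key : {f : (Fin n → Bool) → Bool |
      ∃ ℓ' ≤ ℓ, ∃ C : CompCircuit n ℓ', ∀ x, C.eval x = f x} ⊆ Set.range (evalEnc (n := n) (ℓ := ℓ)) := by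
    rintro f ⟨ℓ', hr, C, hC⟩
    -- padded label
    set lab : Fin ℓ → Fin n × Bool := fun u =>
      if h' : (u : ℕ) < ℓ' then C.label ⟨u, h'⟩ else (⟨0, hn⟩, false) with hlab
    set V : (Fin n → Bool) → Fin ℓ → Bool := fun x w => litVal x (lab w) with hV
    set Lpad : List (Fin ℓ × Fin ℓ) :=
      C.gates.map (fun g => (Fin.castLE hr g.1, Fin.castLE hr g.2)) with hLpad
    have hcomp : ∀ x w, V x (Fin.castLE hr w) = C.init x w := by
      intro x w
      simp only [hV, hlab, init]
      have : ((Fin.castLE hr w : Fin ℓ) : ℕ) < ℓ' := w.isLt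
      rw [dif_pos this]
      congr 1
    have hpad : ∀ x w, runL Lpad (V x) (Fin.castLE hr w) = runL C.gates (C.init x) w := by
      intro x w
      exact runL_castLE hr C.gates (C.init x) (V x) (hcomp x) w
    obtain ⟨L', π, hlen, hrun⟩ := shorten Lpad.length Lpad le_rfl V
    have hL'len : L'.length ≤ ℓ ^ 2 := by omega
    refine ⟨(lab, fun i : Fin (ℓ ^ 2) => L'[i.val]?, π.symm (Fin.castLE hr C.out)), ?_⟩
    funext x
    show runL ((List.finRange (ℓ ^ 2)).filterMap (fun i : Fin (ℓ ^ 2) => L'[i.val]?)) (V x)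
        (π.symm (Fin.castLE hr C.out)) = f x
    rw [decode_encode L' (ℓ ^ 2) hL'len, hrun x _, Equiv.apply_symm_apply, hpad x C.out,
      ← hC x]
    rfl
  calc {f : (Fin n → Bool) → Bool |
      ∃ ℓ' ≤ ℓ, ∃ C : CompCircuit n ℓ', ∀ x, C.eval x = f x}.ncard
      ≤ (Set.range (evalEnc (n := n) (ℓ := ℓ))).ncard :=
        Set.ncard_le_ncard key (Set.toFinite _)
    _ ≤ (Set.univ : Set (Enc n ℓ)).ncard := by
        rw [← Set.image_univ]
        exact Set.ncard_image_le Set.finite_univ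
    _ = Fintype.card (Enc n ℓ) := by
        rw [Set.ncard_univ, Nat.card_eq_fintype_card]
    _ = (2 * n) ^ ℓ * (ℓ ^ 2 + 1) ^ (ℓ ^ 2) * ℓ := by
        simp [Fintype.card_prod, Fintype.card_fun, Fintype.card_option]
        ring_nf
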